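/- Let q : [0,1] → [0,∞) be continuous with ∫₀¹ q(t) dt = 1, let M = max_{x ∈ [0,1]} q(x), and let ω(h) = sup{ |q(x) − q(y)| : x, y ∈ [0,1], |x − y| ≤ h } be its modulus of continuity. Let ε ∈ (0, 1/3) and let n ≥ 2 be an integer satisfying: ω(1/√(n−1)) ≤ ε/100; 2n·exp( −ε² / (8·ω(1/√(n−1))²) ) ≤ ε (with the convention that this holds when ω(1/√(n−1)) = 0); and exp( −ε²·n / (48·M²) ) ≤ ε/2. Then there exist nonnegative reals P₁, …, Pₙ with Σᵢ Pᵢ = 1 such that sup_{x ∈ [0,1]} | Σ_{i=1}^{n} Pᵢ · fₙⁱ(x) − q(x) | ≤ ε, where fₙⁱ(x) = n·binom(n−1, i−1)·x^{i−1}·(1−x)^{n−i}. -/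

import Mathlib

open MeasureTheory intervalIntegral

/-- The density of the `(i+1)`-th (1-indexed) order statistic of `n` i.i.d. uniform
samples on `[0,1]`: `fₙⁱ(x) = n·C(n−1, i)·xⁱ·(1−x)^(n−1−i)` (a scaled Bernstein
basis polynomial), for `i : Fin n`. -/
noncomputable def orderStatDensity (n : ℕ) (i : Fin n) (x : ℝ) : ℝ :=
  (n : ℝ) * (Nat.choose (n - 1) i : ℝ) * x ^ (i : ℕ) * (1 - x) ^ (n - 1 - (i : ℕ))

/-- Bernstein basis function. -/
noncomputable def bb (m i : ℕ) (x : ℝ) : ℝ := (Nat.choose m i : ℝ) * x ^ i * (1 - x) ^ (m - i)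

lemma bb_eval (m i : ℕ) (x : ℝ) : (bernsteinPolynomial ℝ m i).eval x = bb m i x := by
  simp [bernsteinPolynomial, bb]

lemma bb_sum (m : ℕ) (x : ℝ) : ∑ i ∈ Finset.range (m+1), bb m i x = 1 := by
  have := congrArg (Polynomial.eval x) (bernsteinPolynomial.sum ℝ m)
  simpa [Polynomial.eval_finset_sum, bb_eval] using this

lemma bb_variance (m : ℕ) (x : ℝ) :
    ∑ i ∈ Finset.range (m+1), ((m:ℝ) * x - i)^2 * bb m i x = (m:ℝ) * x * (1 - x) := by
  have := congrArg (Polynomial.eval x) (bernsteinPolynomial.variance ℝ m)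
  simpa [Polynomial.eval_finset_sum, bb_eval] using this

lemma bb_variance' (m : ℕ) (hm : 1 ≤ m) (x : ℝ) :
    ∑ k ∈ Finset.range (m+1), bb m k x * ((m:ℝ) * ((k:ℝ)/m - x)^2) = x * (1-x) := by
  have hm0 : (0:ℝ) < (m:ℝ) := by exact_mod_cast hm
  have h2 : ∀ k ∈ Finset.range (m+1),
      bb m k x * ((m:ℝ) * ((k:ℝ)/m - x)^2) = ((m:ℝ)*x - k)^2 * bb m k x / m := by
    intro k _
    field_simp
    ring
  rw [Finset.sum_congr rfl h2, ← Finset.sum_div, bb_variance]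
  field_simp

lemma chain_bound (q : ℝ → ℝ) (W δ : ℝ)
    (hb : ∀ a ∈ Set.Icc (0:ℝ) 1, ∀ b ∈ Set.Icc (0:ℝ) 1, |a - b| ≤ δ → |q a - q b| ≤ W) :
    ∀ k : ℕ, ∀ x ∈ Set.Icc (0:ℝ) 1, ∀ t ∈ Set.Icc (0:ℝ) 1,
      |t - x| ≤ k * δ → |q t - q x| ≤ k * W := by
  intro k
  induction k with
  | zero =>
    intro x hx t ht h
    simp only [Nat.cast_zero, zero_mul] at h ⊢
    have ht' : t = x := by
      have h0 := abs_nonneg (t - x)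
      have : |t - x| = 0 := le_antisymm h h0
      have := abs_eq_zero.mp this
      linarith
    simp [ht']
  | succ k ih =>
    intro x hx t ht h
    push_cast at h
    have hk1 : (0:ℝ) < (k:ℝ) + 1 := by positivity
    set c : ℝ := (k:ℝ) / ((k:ℝ) + 1) with hc
    have hc0 : 0 ≤ c := by positivity
    have hc1 : c ≤ 1 := by rw [hc, div_le_one hk1]; linarith
    set z : ℝ := x + (t - x) * c with hz
    have hzmem : z ∈ Set.Icc (0:ℝ) 1 := by
      obtain ⟨hx0, hx1⟩ := hx; obtain ⟨ht0, ht1⟩ := ht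
      constructor <;> nlinarith
    have hzx' : z - x = (t - x) * c := by rw [hz]; ring
    have hzx : |z - x| = |t - x| * c := by rw [hzx', abs_mul, abs_of_nonneg hc0]
    have htz' : t - z = (t - x) * (1 - c) := by rw [hz]; ring
    have htz : |t - z| = |t - x| * (1 - c) := by
      rw [htz', abs_mul, abs_of_nonneg (show (0:ℝ) ≤ 1 - c by linarith)]
    have h1 : |z - x| ≤ k * δ := by
      rw [hzx]
      calc |t - x| * c ≤ (((k:ℝ) + 1) * δ) * c := mul_le_mul_of_nonneg_right h hc0
        _ = k * δ := by rw [hc]; field_simp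
    have h2 : |t - z| ≤ δ := by
      rw [htz]
      calc |t - x| * (1 - c) ≤ (((k:ℝ) + 1) * δ) * (1 - c) :=
            mul_le_mul_of_nonneg_right h (by linarith)
        _ = δ := by rw [hc]; field_simp; ring
    have hA := ih x hx z hzmem h1
    have hB := hb t ht z hzmem h2
    calc |q t - q x| ≤ |q t - q z| + |q z - q x| := abs_sub_le _ _ _
      _ ≤ W + k * W := by gcongr
      _ = ((k + 1 : ℕ) : ℝ) * W := by push_cast; ring

lemma modulus_bound (q : ℝ → ℝ) (M : ℝ)
    (hq0 : ∀ x ∈ Set.Icc (0:ℝ) 1, 0 ≤ q x) (hqM : ∀ x ∈ Set.Icc (0:ℝ) 1, q x ≤ M)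
    (ω : ℝ → ℝ)
    (hω : ∀ h : ℝ, ω h = sSup { d : ℝ | ∃ x ∈ Set.Icc (0:ℝ) 1, ∃ y ∈ Set.Icc (0:ℝ) 1,
      |x - y| ≤ h ∧ d = |q x - q y| })
    (δ : ℝ) (hδ : 0 < δ) :
    0 ≤ ω δ ∧ ∀ t ∈ Set.Icc (0:ℝ) 1, ∀ x ∈ Set.Icc (0:ℝ) 1,
      |q t - q x| ≤ (1 + |t - x| / δ) * ω δ := by
  set S : Set ℝ := { d : ℝ | ∃ x ∈ Set.Icc (0:ℝ) 1, ∃ y ∈ Set.Icc (0:ℝ) 1,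
      |x - y| ≤ δ ∧ d = |q x - q y| } with hS
  have hbdd : BddAbove S := by
    refine ⟨M, fun d hd => ?_⟩
    obtain ⟨a, ha, b, hb, -, rfl⟩ := hd
    have h1 := hq0 a ha; have h2 := hqM a ha
    have h3 := hq0 b hb; have h4 := hqM b hb
    rw [abs_le]; constructor <;> linarith
  have hmem : ∀ a ∈ Set.Icc (0:ℝ) 1, ∀ b ∈ Set.Icc (0:ℝ) 1, |a - b| ≤ δ →
      |q a - q b| ≤ ω δ := by
    intro a ha b hb hab
    rw [hω]
    exact le_csSup hbdd ⟨a, ha, b, hb, hab, rfl⟩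
  have h0 : 0 ≤ ω δ := by
    have : (0:ℝ) ∈ S := ⟨0, by norm_num, 0, by norm_num, by simpa using hδ.le, by simp⟩
    rw [hω]
    exact le_csSup hbdd this
  refine ⟨h0, fun t ht x hx => ?_⟩
  set k : ℕ := ⌈|t - x| / δ⌉₊ with hk
  have hdiv : 0 ≤ |t - x| / δ := by positivity
  have hle : |t - x| ≤ k * δ := by
    rw [← div_le_iff₀ hδ] at *
    exact Nat.le_ceil _
  have := chain_bound q (ω δ) δ hmem k x hx t ht hle
  refine this.trans ?_
  apply mul_le_mul_of_nonneg_right _ h0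
  have := (Nat.ceil_lt_add_one hdiv).le
  rw [← hk] at this
  linarith

set_option maxHeartbeats 2000000 in
/-- Approximation of a continuous quantile density `q` by a convex combination of
order statistic densities (stochastic Bernstein approximation): under the stated
conditions on the modulus of continuity `ω` of `q`, its maximum `M`, and `n`, there
are weights `P` with `sup_{x ∈ [0,1]} |Σᵢ Pᵢ fₙⁱ(x) − q(x)| ≤ ε`. -/
theorem stmt_18 (q : ℝ → ℝ) (hqc : ContinuousOn q (Set.Icc 0 1))
    (hq0 : ∀ x ∈ Set.Icc (0:ℝ) 1, 0 ≤ q x)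
    (hq1 : (∫ t in (0:ℝ)..1, q t) = 1)
    (M : ℝ) (hM : IsGreatest (q '' Set.Icc (0:ℝ) 1) M)
    (ω : ℝ → ℝ)
    (hω : ∀ h : ℝ, ω h = sSup { d : ℝ | ∃ x ∈ Set.Icc (0:ℝ) 1, ∃ y ∈ Set.Icc (0:ℝ) 1,
      |x - y| ≤ h ∧ d = |q x - q y| })
    (ε : ℝ) (hε0 : 0 < ε) (hε1 : ε < 1 / 3)
    (n : ℕ) (hn : 2 ≤ n)
    (h1 : ω (1 / Real.sqrt ((n : ℝ) - 1)) ≤ ε / 100)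
    (h2 : ω (1 / Real.sqrt ((n : ℝ) - 1)) = 0 ∨
      2 * (n : ℝ) * Real.exp (-(ε ^ 2) / (8 * ω (1 / Real.sqrt ((n : ℝ) - 1)) ^ 2)) ≤ ε)
    (h3 : Real.exp (-(ε ^ 2) * (n : ℝ) / (48 * M ^ 2)) ≤ ε / 2) :
    ∃ P : Fin n → ℝ, (∀ i, 0 ≤ P i) ∧ (∑ i, P i) = 1 ∧
      ∀ x ∈ Set.Icc (0:ℝ) 1,
        |(∑ i, P i * orderStatDensity n i x) - q x| ≤ ε := by
  have hn1 : 1 ≤ n := by omega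
  set m : ℕ := n - 1 with hm
  have hnm : n = m + 1 := by omega
  have hm1 : 1 ≤ m := by omega
  have hMr0 : (0:ℝ) < (m:ℝ) := by exact_mod_cast hm1
  have hNr0 : (0:ℝ) < (n:ℝ) := by positivity
  have hNr : (n:ℝ) = (m:ℝ) + 1 := by rw [hnm]; push_cast; ring
  have hcast : (n:ℝ) - 1 = (m:ℝ) := by rw [hNr]; ring
  set δ : ℝ := 1 / Real.sqrt ((n:ℝ) - 1) with hδdef
  have hsq : Real.sqrt ((n:ℝ) - 1) = Real.sqrt (m:ℝ) := by rw [hcast]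
  have hsqpos : 0 < Real.sqrt (m:ℝ) := Real.sqrt_pos.mpr hMr0
  have hδpos : 0 < δ := by rw [hδdef, hsq]; positivity
  set W : ℝ := ω δ with hWdef
  have hqM : ∀ y ∈ Set.Icc (0:ℝ) 1, q y ≤ M := fun y hy => hM.2 ⟨y, hy, rfl⟩
  obtain ⟨hW0, hmod⟩ := modulus_bound q M hq0 hqM ω hω δ hδpos
  have hWε : W ≤ ε / 100 := h1
  set a : ℕ → ℝ := fun k => (k:ℝ) / n with ha
  have ha1 : ∀ k : ℕ, a (k+1) = ((k:ℝ) + 1) / n := by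
    intro k; simp only [ha]; push_cast; ring
  have hstep : ∀ k : ℕ, a k ≤ a (k+1) := by
    intro k; rw [ha1]; simp only [ha]
    gcongr
    linarith
  have hsub : ∀ k : ℕ, k ≤ m → Set.Icc (a k) (a (k+1)) ⊆ Set.Icc (0:ℝ) 1 := by
    intro k hk
    rw [ha1]; simp only [ha]
    apply Set.Icc_subset_Icc
    · positivity
    · rw [div_le_one hNr0]
      have : (k:ℝ) ≤ (m:ℝ) := by exact_mod_cast hk
      rw [hNr]; linarith
  have hint : ∀ k : ℕ, k ≤ m → IntervalIntegrable q MeasureTheory.volume (a k) (a (k+1)) := by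
    intro k hk
    apply ContinuousOn.intervalIntegrable
    apply hqc.mono
    rw [Set.uIcc_of_le (hstep k)]
    exact hsub k hk
  set g : ℕ → ℝ := fun k => ∫ t in (a k)..(a (k+1)), q t with hg
  refine ⟨fun i => g i, ?_, ?_, ?_⟩
  · -- nonnegativity
    intro i
    have hik : (i:ℕ) ≤ m := by omega
    apply intervalIntegral.integral_nonneg (hstep i)
    intro u hu
    exact hq0 u (hsub i hik hu)
  · -- sum equals 1
    rw [Fin.sum_univ_eq_sum_range (fun k => g k) n]
    have hadj := intervalIntegral.sum_integral_adjacent_intervals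
      (a := a) (n := n) (f := q) (μ := MeasureTheory.volume) ?_
    · rw [hg]
      rw [hadj]
      have ha0 : a 0 = 0 := by simp [ha]
      have han : a n = 1 := by simp only [ha]; field_simp
      rw [ha0, han, hq1]
    · intro k hk
      exact hint k (by omega)
  · -- main estimate
    intro x hx
    obtain ⟨hx0, hx1⟩ := hx
    have hbbnn : ∀ k : ℕ, 0 ≤ bb m k x := by
      intro k
      apply mul_nonneg (mul_nonneg (by positivity) (by positivity))
      exact pow_nonneg (by linarith) _
    have hterm : ∀ i : Fin n, g (i:ℕ) * orderStatDensity n i x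
        = g (i:ℕ) * ((n:ℝ) * bb m (i:ℕ) x) := by
      intro i
      have hnm' : n - 1 = m := rfl
      simp only [orderStatDensity, bb, hnm']
      ring
    calc |(∑ i : Fin n, g (i:ℕ) * orderStatDensity n i x) - q x|
        = |(∑ k ∈ Finset.range (m+1), g k * ((n:ℝ) * bb m k x)) - q x| := by
          rw [Finset.sum_congr rfl (fun i _ => hterm i),
            Fin.sum_univ_eq_sum_range (fun k => g k * ((n:ℝ) * bb m k x)) n,
            show Finset.range n = Finset.range (m+1) by rw [hnm]]
      _ = |∑ k ∈ Finset.range (m+1), (g k * ((n:ℝ) * bb m k x) - q x * bb m k x)| := by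
          rw [Finset.sum_sub_distrib, ← Finset.mul_sum, bb_sum, mul_one]
      _ ≤ ∑ k ∈ Finset.range (m+1), |g k * ((n:ℝ) * bb m k x) - q x * bb m k x| :=
          Finset.abs_sum_le_sum_abs _ _
      _ ≤ ∑ k ∈ Finset.range (m+1),
            bb m k x * ((5/2 + (m:ℝ) * ((k:ℝ)/(m:ℝ) - x)^2 / 2) * W) := by
          apply Finset.sum_le_sum
          intro k hk
          have hkm : k ≤ m := by
            simp only [Finset.mem_range] at hk; omega
          have hkmr : (k:ℝ) ≤ (m:ℝ) := by exact_mod_cast hkm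
          have hrw : g k * ((n:ℝ) * bb m k x) - q x * bb m k x
              = bb m k x * ((n:ℝ) * g k - q x) := by ring
          rw [hrw, abs_mul, abs_of_nonneg (hbbnn k)]
          apply mul_le_mul_of_nonneg_left _ (hbbnn k)
          -- |n * g k - q x| ≤ C_k
          have hib : IntervalIntegrable q MeasureTheory.volume (a k) (a (k+1)) :=
            hint k hkm
          have hlen : a (k+1) - a k = 1 / (n:ℝ) := by
            rw [ha1]; simp only [ha]; field_simp; ring
          have key : (n:ℝ) * g k - q x
              = (n:ℝ) * ∫ t in (a k)..(a (k+1)), (q t - q x) := by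
            rw [intervalIntegral.integral_sub hib intervalIntegrable_const,
              intervalIntegral.integral_const, smul_eq_mul, hlen, hg]
            field_simp
          rw [key]
          set C : ℝ := (5/2 + (m:ℝ) * ((k:ℝ)/(m:ℝ) - x)^2 / 2) * W with hC
          have hptwise : ∀ t ∈ Set.uIoc (a k) (a (k+1)), ‖q t - q x‖ ≤ C := by
            intro t htmem
            rw [Set.uIoc_of_le (hstep k)] at htmem
            have htIab : t ∈ Set.Icc (a k) (a (k+1)) := ⟨htmem.1.le, htmem.2⟩
            have htI : t ∈ Set.Icc (0:ℝ) 1 := hsub k hkm htIab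
            have hq5 := hmod t htI x ⟨hx0, hx1⟩
            rw [Real.norm_eq_abs]
            refine hq5.trans ?_
            rw [hC]
            apply mul_le_mul_of_nonneg_right _ hW0
            -- 1 + |t - x| / δ ≤ 5/2 + m * (k/m - x)^2 / 2
            have hδrw : |t - x| / δ = |t - x| * Real.sqrt (m:ℝ) := by
              rw [hδdef, hsq]
              field_simp
            rw [hδrw]
            have hta : a k ≤ t := htIab.1
            have htb : t ≤ a (k+1) := htIab.2
            rw [ha1] at htb
            simp only [ha] at hta
            -- bounds relating t and k/m
            have hk0 : (0:ℝ) ≤ (k:ℝ) := Nat.cast_nonneg k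
            have hsplit : ((k:ℝ)+1)/(n:ℝ) = (k:ℝ)/(n:ℝ) + 1/(n:ℝ) := by ring
            have e1 : (k:ℝ)/(m:ℝ) ≤ ((k:ℝ)+1)/(n:ℝ) := by
              rw [div_le_div_iff₀ hMr0 hNr0, hNr]
              nlinarith
            have e2 : (k:ℝ)/(n:ℝ) ≤ (k:ℝ)/(m:ℝ) := by
              rw [div_le_div_iff₀ hNr0 hMr0, hNr]
              nlinarith
            have htk : |t - (k:ℝ)/(m:ℝ)| ≤ 1/(n:ℝ) := by
              rw [abs_le]
              constructor <;> linarith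
            have htri : |t - x| ≤ |t - (k:ℝ)/(m:ℝ)| + |(k:ℝ)/(m:ℝ) - x| :=
              abs_sub_le t ((k:ℝ)/(m:ℝ)) x
            have hsm1 : Real.sqrt (m:ℝ) * |(k:ℝ)/(m:ℝ) - x|
                ≤ 1/2 + (m:ℝ) * ((k:ℝ)/(m:ℝ) - x)^2 / 2 := by
              nlinarith [sq_nonneg (1 - Real.sqrt (m:ℝ) * |(k:ℝ)/(m:ℝ) - x|),
                Real.sq_sqrt hMr0.le, sq_abs ((k:ℝ)/(m:ℝ) - x),
                Real.sqrt_nonneg (m:ℝ), abs_nonneg ((k:ℝ)/(m:ℝ) - x)]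
            have hsm2 : Real.sqrt (m:ℝ) / (n:ℝ) ≤ 1 := by
              rw [div_le_one hNr0]
              have h' : Real.sqrt (m:ℝ) ≤ Real.sqrt ((n:ℝ)^2) :=
                Real.sqrt_le_sqrt (by nlinarith)
              rwa [Real.sqrt_sq hNr0.le] at h'
            have hmul : |t - x| * Real.sqrt (m:ℝ)
                ≤ (1/(n:ℝ) + |(k:ℝ)/(m:ℝ) - x|) * Real.sqrt (m:ℝ) := by
              apply mul_le_mul_of_nonneg_right _ (Real.sqrt_nonneg _)
              linarith
            have hexp : (1/(n:ℝ) + |(k:ℝ)/(m:ℝ) - x|) * Real.sqrt (m:ℝ)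
                = Real.sqrt (m:ℝ) / (n:ℝ) + Real.sqrt (m:ℝ) * |(k:ℝ)/(m:ℝ) - x| := by
              ring
            rw [hexp] at hmul
            linarith
          have hnormle := intervalIntegral.norm_integral_le_of_norm_le_const hptwise
          rw [Real.norm_eq_abs] at hnormle
          have hlenabs : |a (k+1) - a k| = 1/(n:ℝ) := by
            rw [hlen, abs_of_pos (by positivity)]
          rw [hlenabs] at hnormle
          calc |(n:ℝ) * ∫ t in (a k)..(a (k+1)), (q t - q x)|
              = (n:ℝ) * |∫ t in (a k)..(a (k+1)), (q t - q x)| := by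
                rw [abs_mul, abs_of_pos hNr0]
            _ ≤ (n:ℝ) * (C * (1/(n:ℝ))) := by
                apply mul_le_mul_of_nonneg_left hnormle hNr0.le
            _ = C := by field_simp
      _ = 5/2 * W * (∑ k ∈ Finset.range (m+1), bb m k x)
          + W/2 * (∑ k ∈ Finset.range (m+1), bb m k x * ((m:ℝ) * ((k:ℝ)/(m:ℝ) - x)^2)) := by
          rw [Finset.mul_sum, Finset.mul_sum, ← Finset.sum_add_distrib]
          apply Finset.sum_congr rfl
          intro k _
          ring
      _ = 5/2 * W + W/2 * (x * (1-x)) := by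
          rw [bb_sum, bb_variance' m hm1, mul_one]
      _ ≤ ε := by
          nlinarith [mul_nonneg hW0 (sq_nonneg (x - 1/2)), hW0, hWε, hε0.le]
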